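/- Let (M,J,g) be a compact Hermitian manifold of complex dimension n that is geometrically Bott-Chern formal (the wedge product of any two Bott-Chern harmonic forms is Bott-Chern harmonic). Then every holomorphic p-form on M is d-closed, for all 0 ≤ p ≤ n. -/

import Mathlib

/-!
STATEMENT 9: Let (M,J,g) be a compact Hermitian manifold of complex dimension n that is
geometrically Bott-Chern formal (the wedge product of any two Bott-Chern harmonic forms
is Bott-Chern harmonic). Then every holomorphic p-form on M is d-closed, 0 ≤ p ≤ n.

We model the bigraded algebra of forms on the compact Hermitian n-manifold abstractly:
`Ω` is the algebra of complex forms (multiplication = wedge), `A p q` the submodule of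
(p,q)-forms, `del`/`delbar` the Dolbeault operators, `hstar` the ℂ-antilinear Hodge
star and `conj` conjugation, with their standard properties, the Leibniz rules, the
orthogonality of Bott-Chern harmonic forms and im(∂∂̄) coming from the Bott-Chern Hodge
decomposition (`horth`), and the pointwise-positivity fact that for a nonzero (p,0)-form
x, x ∧ x̄ ≠ 0 (`hpos`). A holomorphic p-form α (∂̄α = 0) is d-closed iff ∂α = 0.
-/

/-- Bott-Chern harmonicity: ∂x = 0, ∂̄x = 0 and ∂∂̄*x = 0. -/
def IsBCHarmonic {Ω : Type*} [Ring Ω] [Algebra ℂ Ω]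
    (del delbar : Ω →ₗ[ℂ] Ω) (hstar : Ω → Ω) (x : Ω) : Prop :=
  del x = 0 ∧ delbar x = 0 ∧ del (delbar (hstar x)) = 0

theorem stmt_9 (n : ℕ) {Ω : Type*} [Ring Ω] [Algebra ℂ Ω]
    (A : ℕ → ℕ → Submodule ℂ Ω)
    (del delbar : Ω →ₗ[ℂ] Ω) (hstar conj : Ω → Ω)
    (hdel_mem : ∀ p q, ∀ x ∈ A p q, del x ∈ A (p + 1) q)
    (hdelbar_mem : ∀ p q, ∀ x ∈ A p q, delbar x ∈ A p (q + 1))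
    (hstar_mem : ∀ p q, ∀ x ∈ A p q, hstar x ∈ A (n - p) (n - q))
    (hconj_mem : ∀ p q, ∀ x ∈ A p q, conj x ∈ A q p)
    (hmul_mem : ∀ p q r s, ∀ x ∈ A p q, ∀ y ∈ A r s, x * y ∈ A (p + r) (q + s))
    (hdel2 : ∀ x : Ω, del (del x) = 0)
    (hdelbar2 : ∀ x : Ω, delbar (delbar x) = 0)
    (hanticomm : ∀ x : Ω, del (delbar x) = - delbar (del x))
    (hconj_del : ∀ x : Ω, conj (del x) = delbar (conj x))
    (hconj_delbar : ∀ x : Ω, conj (delbar x) = del (conj x))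
    (hdeg_p : ∀ p q, n < p → ∀ x ∈ A p q, x = 0)
    (hdeg_q : ∀ p q, n < q → ∀ x ∈ A p q, x = 0)
    (hleib_del : ∀ p q, ∀ x ∈ A p q, ∀ y : Ω,
      del (x * y) = del x * y + ((-1 : ℂ) ^ (p + q)) • (x * del y))
    (hleib_delbar : ∀ p q, ∀ x ∈ A p q, ∀ y : Ω,
      delbar (x * y) = delbar x * y + ((-1 : ℂ) ^ (p + q)) • (x * delbar y))
    -- orthogonality of Bott-Chern harmonic forms and im(∂∂̄) (Hodge decomposition):
    (horth : ∀ p q, ∀ x ∈ A (p + 1) (q + 1), IsBCHarmonic del delbar hstar x →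
      (∃ y ∈ A p q, x = del (delbar y)) → x = 0)
    -- a nonzero (p,0)-form wedged with its conjugate is nonzero (pointwise fact):
    (hpos : ∀ p, ∀ x ∈ A p 0, x ≠ 0 → x * conj x ≠ 0)
    -- geometric Bott-Chern formality:
    (hformal : ∀ x y : Ω, (∃ p q, x ∈ A p q) → (∃ r s, y ∈ A r s) →
      IsBCHarmonic del delbar hstar x → IsBCHarmonic del delbar hstar y →
      IsBCHarmonic del delbar hstar (x * y)) :
    ∀ p, p ≤ n → ∀ α ∈ A p 0, delbar α = 0 → del α = 0 := by

  intro p hpn α hα hdbα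
  -- conj 0 = 0
  have hconj0 : conj (0 : Ω) = 0 := by
    have h0 : (0 : Ω) ∈ A (n + 1) 0 := (A (n+1) 0).zero_mem
    have := hconj_mem _ _ _ h0
    exact hdeg_q 0 (n+1) (Nat.lt_succ_self n) _ this
  set β := del α with hβ
  have hβmem : β ∈ A (p + 1) 0 := hdel_mem p 0 α hα
  -- β is BC harmonic
  have hβdel : del β = 0 := hdel2 α
  have hβdelbar : delbar β = 0 := by
    have := hanticomm α
    rw [hdbα, map_zero] at this
    have : delbar (del α) = 0 := by
      have h := hanticomm α
      rw [hdbα, map_zero] at h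
      exact (neg_eq_zero.mp h.symm)
    exact this
  have hβharm : IsBCHarmonic del delbar hstar β := by
    refine ⟨hβdel, hβdelbar, ?_⟩
    have h1 : hstar β ∈ A (n - (p+1)) (n - 0) := hstar_mem _ _ _ hβmem
    have h2 : delbar (hstar β) ∈ A (n - (p+1)) (n - 0 + 1) := hdelbar_mem _ _ _ h1
    have h3 : delbar (hstar β) = 0 := hdeg_q _ _ (by omega) _ h2
    rw [h3, map_zero]
  set γ := conj β with hγ
  have hγmem : γ ∈ A 0 (p + 1) := hconj_mem _ _ _ hβmem
  have hγdel : del γ = 0 := by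
    rw [← hconj_delbar β, hβdelbar, hconj0]
  have hγdelbar : delbar γ = 0 := by
    rw [← hconj_del β, hβdel, hconj0]
  have hγharm : IsBCHarmonic del delbar hstar γ := by
    refine ⟨hγdel, hγdelbar, ?_⟩
    have h1 : hstar γ ∈ A (n - 0) (n - (p+1)) := hstar_mem _ _ _ hγmem
    have h2 : delbar (hstar γ) ∈ A (n - 0) (n - (p+1) + 1) := hdelbar_mem _ _ _ h1
    have h3 : del (delbar (hstar γ)) ∈ A (n - 0 + 1) (n - (p+1) + 1) :=
      hdel_mem _ _ _ h2
    exact hdeg_p _ _ (by omega) _ h3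
  -- the product is BC harmonic
  have hxharm : IsBCHarmonic del delbar hstar (β * γ) :=
    hformal β γ ⟨_, _, hβmem⟩ ⟨_, _, hγmem⟩ hβharm hγharm
  have hxmem : β * γ ∈ A (p + 1) (p + 1) := by
    have := hmul_mem _ _ _ _ _ hβmem _ hγmem
    simpa using this
  -- β * γ is ∂∂̄-exact
  have hcαmem : conj α ∈ A 0 p := hconj_mem _ _ _ hα
  have hdbcα : delbar (conj α) = γ := by
    rw [← hconj_del α]
  have key : del (delbar (α * conj α)) = ((-1 : ℂ) ^ p) • (β * γ) := by
    have h1 : delbar (α * conj α)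
        = delbar α * conj α + ((-1 : ℂ) ^ (p + 0)) • (α * delbar (conj α)) :=
      hleib_delbar p 0 α hα (conj α)
    rw [hdbα, zero_mul, zero_add, hdbcα] at h1
    rw [h1, map_smul]
    have h2 : del (α * γ) = del α * γ + ((-1 : ℂ) ^ (p + 0)) • (α * del γ) :=
      hleib_del p 0 α hα γ
    rw [hγdel, mul_zero, smul_zero, add_zero] at h2
    rw [h2]
    simp
    rfl
  have hexact : β * γ = del (delbar (((-1 : ℂ) ^ p) • (α * conj α))) := by
    rw [map_smul, map_smul, key, smul_smul, ← pow_add, ← two_mul]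
    simp [pow_mul]
  have hymem : ((-1 : ℂ) ^ p) • (α * conj α) ∈ A p p := by
    apply Submodule.smul_mem
    have := hmul_mem _ _ _ _ _ hα _ hcαmem
    simpa using this
  have hzero : β * γ = 0 :=
    horth p p _ hxmem hxharm ⟨_, hymem, hexact⟩
  by_contra hne
  exact hpos (p+1) β hβmem hne hzero
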